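/- An n-Hausdorff space X is n-H-closed if and only if every open ultrafilter U on X satisfies |aU| = n−1. -/

import Mathlib

open Set Topology Function

universe u v

/-- A space is `n`-Hausdorff if any `n` distinct points admit open neighborhoods
with empty intersection. -/
def NHausdorff (X : Type u) [TopologicalSpace X] (n : ℕ) : Prop :=
  ∀ x : Fin n → X, Function.Injective x →
    ∃ U : Fin n → Set X, (∀ i, IsOpen (U i) ∧ x i ∈ U i) ∧ (⋂ i, U i) = (∅ : Set X)

/-- An open filter on `X`: a nonempty family of nonempty open sets closed under
finite intersections and open supersets. -/
structure IsOpenFilter {X : Type u} [TopologicalSpace X] (F : Set (Set X)) : Prop where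
  nonempty : F.Nonempty
  isOpen_mem : ∀ U ∈ F, IsOpen U
  nonempty_mem : ∀ U ∈ F, U.Nonempty
  inter_mem : ∀ U ∈ F, ∀ V ∈ F, U ∩ V ∈ F
  superset_mem : ∀ U ∈ F, ∀ V : Set X, IsOpen V → U ⊆ V → V ∈ F

/-- An open ultrafilter: a maximal open filter. -/
def IsOpenUltrafilter {X : Type u} [TopologicalSpace X] (F : Set (Set X)) : Prop :=
  IsOpenFilter F ∧ ∀ G : Set (Set X), IsOpenFilter G → F ⊆ G → G = F

/-- The adherence of a family of sets: `⋂ {cl U : U ∈ F}`. -/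
def adh {X : Type u} [TopologicalSpace X] (F : Set (Set X)) : Set X :=
  ⋂ U ∈ F, closure U

/-- `X` is `n`-H-closed: `X` is `n`-Hausdorff and closed in every `n`-Hausdorff space
in which it embeds. -/
def NHClosed (X : Type u) [TopologicalSpace X] (n : ℕ) : Prop :=
  NHausdorff X n ∧
    ∀ (Z : Type u) (_ : TopologicalSpace Z) (e : X → Z),
      NHausdorff Z n → IsEmbedding e → IsClosed (Set.range e)

section Helpers
variable {X : Type u} [TopologicalSpace X] {F : Set (Set X)}

lemma IsOpenFilter.univ_mem (hF : IsOpenFilter F) : univ ∈ F := by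
  obtain ⟨U, hU⟩ := hF.nonempty
  exact hF.superset_mem U hU univ isOpen_univ (subset_univ U)

lemma mem_adh_iff {x : X} : x ∈ adh F ↔ ∀ U ∈ F, x ∈ closure U := by
  simp [adh]

/-- If an open set meets every member of an open ultrafilter, it belongs to it. -/
lemma IsOpenUltrafilter.mem_of_inter_nonempty (hF : IsOpenUltrafilter F) {V : Set X}
    (hV : IsOpen V) (h : ∀ U ∈ F, (V ∩ U).Nonempty) : V ∈ F := by
  set G : Set (Set X) := {W | IsOpen W ∧ ∃ U ∈ F, V ∩ U ⊆ W} with hGdef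
  have hFG : F ⊆ G := fun U hU => ⟨hF.1.isOpen_mem U hU, U, hU, inter_subset_right⟩
  have hG : IsOpenFilter G := by
    constructor
    · exact ⟨V, hV, hF.1.nonempty.choose, hF.1.nonempty.choose_spec, inter_subset_left⟩
    · exact fun W hW => hW.1
    · rintro W ⟨hWo, U, hU, hsub⟩
      exact (h U hU).mono hsub
    · rintro W1 ⟨h1o, U1, hU1, h1⟩ W2 ⟨h2o, U2, hU2, h2⟩
      exact ⟨h1o.inter h2o, U1 ∩ U2, hF.1.inter_mem U1 hU1 U2 hU2,
        fun x hx => ⟨h1 ⟨hx.1, hx.2.1⟩, h2 ⟨hx.1, hx.2.2⟩⟩⟩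
    · rintro W ⟨hWo, U, hU, hsub⟩ W' hW'o hWW'
      exact ⟨hW'o, U, hU, hsub.trans hWW'⟩
  have : G = F := hF.2 G hG hFG
  rw [← this]
  exact ⟨hV, hF.1.nonempty.choose, hF.1.nonempty.choose_spec, inter_subset_left⟩

lemma IsOpenFilter.biInter_finset_mem (hF : IsOpenFilter F) {ι : Type*} (g : ι → Set X)
    (s : Finset ι) (hg : ∀ i ∈ s, g i ∈ F) : (⋂ i ∈ s, g i) ∈ F := by
  classical
  induction s using Finset.induction with
  | empty => simpa using hF.univ_mem
  | insert a s hni ih =>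
    rw [Finset.set_biInter_insert]
    exact hF.inter_mem _ (hg a (Finset.mem_insert_self a s)) _
      (ih fun i hi => hg i (Finset.mem_insert_of_mem hi))

lemma IsOpenFilter.iInter_fin_mem (hF : IsOpenFilter F) {k : ℕ} (g : Fin k → Set X)
    (hg : ∀ i, g i ∈ F) : (⋂ i, g i) ∈ F := by
  have := hF.biInter_finset_mem g Finset.univ (fun i _ => hg i)
  simpa using this

/-- Every open filter extends to an open ultrafilter. -/
lemma IsOpenFilter.exists_ultrafilter (hF : IsOpenFilter F) :
    ∃ G, IsOpenUltrafilter G ∧ F ⊆ G := by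
  have hz : ∀ c ⊆ {G : Set (Set X) | IsOpenFilter G}, IsChain (· ⊆ ·) c → c.Nonempty →
      ∃ ub ∈ {G : Set (Set X) | IsOpenFilter G}, ∀ s ∈ c, s ⊆ ub := by
    intro c hcS hchain hcne
    refine ⟨⋃₀ c, ?_, fun s hs => subset_sUnion_of_mem hs⟩
    obtain ⟨G0, hG0⟩ := hcne
    constructor
    · obtain ⟨U, hU⟩ := (hcS hG0).nonempty
      exact ⟨U, G0, hG0, hU⟩
    · rintro U ⟨G, hG, hUG⟩; exact (hcS hG).isOpen_mem U hUG
    · rintro U ⟨G, hG, hUG⟩; exact (hcS hG).nonempty_mem U hUG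
    · rintro U ⟨G1, hG1, hU1⟩ V ⟨G2, hG2, hV2⟩
      rcases hchain.total hG1 hG2 with h | h
      · exact ⟨G2, hG2, (hcS hG2).inter_mem U (h hU1) V hV2⟩
      · exact ⟨G1, hG1, (hcS hG1).inter_mem U hU1 V (h hV2)⟩
    · rintro U ⟨G, hG, hUG⟩ V hVo hUV
      exact ⟨G, hG, (hcS hG).superset_mem U hUG V hVo hUV⟩
  obtain ⟨m, hFm, hm⟩ := zorn_subset_nonempty {G : Set (Set X) | IsOpenFilter G} hz F hF
  exact ⟨m, ⟨hm.prop, fun G hG hmG => (hm.eq_of_subset hG hmG).symm⟩, hFm⟩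

/-- From `A.encard = n` extract an injective enumeration. -/
lemma exists_fin_inj_of_encard_eq {α : Type*} {A : Set α} {n : ℕ} (h : A.encard = n) :
    ∃ x : Fin n → α, Function.Injective x ∧ range x = A := by
  have hfin : A.Finite := finite_of_encard_eq_coe h
  have hcard : Nat.card A = n := by
    rw [Nat.card_coe_set_eq, Set.ncard_def, h, ENat.toNat_coe]
  haveI : Finite A := hfin.to_subtype
  obtain e := Finite.equivFinOfCardEq hcard
  refine ⟨fun i => (e.symm i : α), ?_, ?_⟩
  · intro a b hab
    have := Subtype.coe_injective hab
    exact e.symm.injective this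
  · calc range (fun i => ((e.symm i : A) : α)) = range ((↑) : A → α) :=
          e.symm.surjective.range_comp _
      _ = A := Subtype.range_coe

/-- In an `n`-Hausdorff space, the adherence of an open ultrafilter has at most
`n - 1` points. -/
lemma adh_encard_le {n : ℕ} (hn : 1 ≤ n) (hX : NHausdorff X n) (hF : IsOpenUltrafilter F) :
    (adh F).encard ≤ ((n - 1 : ℕ) : ℕ∞) := by
  by_contra hlt
  rw [not_le] at hlt
  have hle : ((n : ℕ) : ℕ∞) ≤ (adh F).encard := by
    have : ((n - 1 : ℕ) : ℕ∞) + 1 ≤ (adh F).encard := Order.add_one_le_of_lt hlt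
    calc ((n : ℕ) : ℕ∞) = ((n - 1 : ℕ) : ℕ∞) + 1 := by
          norm_cast; omega
      _ ≤ (adh F).encard := this
  obtain ⟨t, hts, htc⟩ := Set.exists_subset_encard_eq hle
  obtain ⟨x, hxinj, hxr⟩ := exists_fin_inj_of_encard_eq htc
  obtain ⟨U, hU, hUe⟩ := hX x hxinj
  have hUF : ∀ i, U i ∈ F := by
    intro i
    refine hF.mem_of_inter_nonempty (hU i).1 (fun V hV => ?_)
    have hxi : x i ∈ adh F := hts (hxr ▸ mem_range_self i)
    exact mem_closure_iff.mp (mem_adh_iff.mp hxi V hV) (U i) (hU i).1 (hU i).2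
  have := hF.1.nonempty_mem _ (hF.1.iInter_fin_mem U hUF)
  rw [hUe] at this
  exact this.ne_empty rfl

end Helpers

section Ext

variable {X : Type u} [TopologicalSpace X] {F : Set (Set X)} {m : ℕ}

/-- `X` together with `m` extra points. -/
abbrev ExtSp (X : Type u) (m : ℕ) : Type u := X ⊕ ULift.{u} (Fin m)

/-- The topology on `X ⊕ {p₁, …, pₘ}` where each `pᵢ` has the members of `F` as a
neighborhood base. -/
def extTop (hF : IsOpenFilter F) (m : ℕ) : TopologicalSpace (ExtSp X m) where
  IsOpen W := IsOpen (Sum.inl ⁻¹' W) ∧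
    ∀ p : ULift.{u} (Fin m), Sum.inr p ∈ W → ∃ U ∈ F, Sum.inl '' U ⊆ W
  isOpen_univ := ⟨by simp, fun p _ => ⟨univ, hF.univ_mem, subset_univ _⟩⟩
  isOpen_inter := by
    rintro W1 W2 ⟨h1, h1'⟩ ⟨h2, h2'⟩
    refine ⟨by rw [preimage_inter]; exact h1.inter h2, fun p hp => ?_⟩
    obtain ⟨U1, hU1, hs1⟩ := h1' p hp.1
    obtain ⟨U2, hU2, hs2⟩ := h2' p hp.2
    exact ⟨U1 ∩ U2, hF.inter_mem U1 hU1 U2 hU2,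
      fun w hw => ⟨hs1 ((image_mono inter_subset_left) hw),
                   hs2 ((image_mono inter_subset_right) hw)⟩⟩
  isOpen_sUnion := by
    intro S hS
    refine ⟨?_, fun p hp => ?_⟩
    · rw [preimage_sUnion]
      exact isOpen_biUnion fun W hW => (hS W hW).1
    · obtain ⟨W, hWS, hpW⟩ := hp
      obtain ⟨U, hUF, hsub⟩ := (hS W hWS).2 p hpW
      exact ⟨U, hUF, hsub.trans (subset_sUnion_of_mem hWS)⟩

lemma ext_isEmbedding (hF : IsOpenFilter F) :
    @IsEmbedding X (ExtSp X m) _ (extTop hF m) Sum.inl := by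
  letI := extTop hF m
  rw [isEmbedding_iff]
  refine ⟨⟨TopologicalSpace.ext_iff.mpr fun s => ?_⟩, Sum.inl_injective⟩
  constructor
  · intro hs
    refine isOpen_induced_iff.mpr ⟨Sum.inl '' s, ⟨?_, fun p hp => ?_⟩,
      preimage_image_eq s Sum.inl_injective⟩
    · rwa [preimage_image_eq s Sum.inl_injective]
    · exact absurd hp (by simp)
  · rintro ⟨t, ht, rfl⟩
    exact ht.1

lemma ext_not_closed (hF : IsOpenFilter F) (hm : 0 < m) :
    ¬ @IsClosed (ExtSp X m) (extTop hF m) (Set.range Sum.inl) := by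
  letI := extTop hF m
  intro hcl
  have hp : (Sum.inr ⟨⟨0, hm⟩⟩ : ExtSp X m) ∈ closure (Set.range Sum.inl) := by
    rw [mem_closure_iff]
    intro W hW hpW
    obtain ⟨U, hUF, hsub⟩ := hW.2 _ hpW
    obtain ⟨u, hu⟩ := hF.nonempty_mem U hUF
    exact ⟨Sum.inl u, hsub ⟨u, hu, rfl⟩, ⟨u, rfl⟩⟩
  have := hcl.closure_subset hp
  obtain ⟨a, ha⟩ := this
  exact Sum.inl_ne_inr ha

end Ext

section Ext2

variable {X : Type u} [TopologicalSpace X] {F : Set (Set X)}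

lemma ext_nHausdorff {n k : ℕ} (hn : 2 ≤ n) (hX : NHausdorff X n)
    (hF : IsOpenUltrafilter F) (hk : (adh F).encard = (k : ℕ∞)) (hkn : k < n - 1) :
    @NHausdorff (ExtSp X (n - 1 - k)) (extTop hF.1 (n - 1 - k)) n := by
  classical
  letI := extTop hF.1 (n - 1 - k)
  intro z hz
  by_cases hall : ∀ i, ∃ x, z i = Sum.inl x
  · -- all points are in `X`
    choose x hx using hall
    have hxinj : Injective x := fun a b h => hz (by rw [hx a, hx b, h])
    obtain ⟨U, hU, hUe⟩ := hX x hxinj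
    refine ⟨fun i => Sum.inl '' U i, fun i => ⟨⟨?_, fun p hp => absurd hp (by simp)⟩, ?_⟩, ?_⟩
    · rw [preimage_image_eq _ Sum.inl_injective]; exact (hU i).1
    · rw [hx i]; exact mem_image_of_mem _ (hU i).2
    · ext w
      simp only [mem_iInter, mem_empty_iff_false, iff_false]
      intro hw
      cases w with
      | inl a =>
        have ha : a ∈ ⋂ i, U i := by
          refine mem_iInter.2 fun i => ?_
          obtain ⟨b, hb, hba⟩ := hw i
          rwa [← Sum.inl_injective hba]
        rw [hUe] at ha
        exact ha
      | inr p =>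
        obtain ⟨b, -, hb⟩ := hw ⟨0, by omega⟩
        exact Sum.inl_ne_inr hb
  · push_neg at hall
    obtain ⟨i₀, hi₀⟩ := hall
    obtain ⟨p, hp⟩ : ∃ p, z i₀ = Sum.inr p := by
      cases h : z i₀ with
      | inl a => exact absurd h (hi₀ a)
      | inr q => exact ⟨q, rfl⟩
    -- find a point of `X` outside the adherence
    have hexj : ∃ j x, z j = Sum.inl x ∧ x ∉ adh F := by
      by_contra hc
      push_neg at hc
      have hsub : range z ⊆ Sum.inl '' (adh F) ∪ range Sum.inr := by
        rintro _ ⟨i, rfl⟩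
        cases hzi : z i with
        | inl a => exact Or.inl ⟨a, hc i a hzi, rfl⟩
        | inr q => exact Or.inr ⟨q, rfl⟩
      have h1 : (range z).encard = (n : ℕ∞) := by
        rw [← image_univ, hz.encard_image, encard_univ]
        simp
      have h2 : (Sum.inl '' (adh F) ∪ range Sum.inr : Set (ExtSp X (n - 1 - k))).encard ≤ ((n - 1 : ℕ) : ℕ∞) := by
        refine (encard_union_le _ _).trans ?_
        rw [Sum.inl_injective.encard_image, hk, ← image_univ,
          Sum.inr_injective.encard_image, encard_univ]
        have : ENat.card (ULift.{u} (Fin (n - 1 - k))) = ((n - 1 - k : ℕ) : ℕ∞) := by simp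
        rw [this, ← Nat.cast_add]
        exact_mod_cast le_of_eq (by omega)
      have := (h1 ▸ (encard_le_encard hsub)).trans h2
      have hnn : n ≤ n - 1 := by exact_mod_cast this
      omega
    obtain ⟨j, x0, hj, hx0⟩ := hexj
    rw [mem_adh_iff] at hx0
    push_neg at hx0
    obtain ⟨U, hUF, hxU⟩ := hx0
    have hji : j ≠ i₀ := by
      intro h; exact hi₀ x0 (h ▸ hj)
    set V : Set X := (closure U)ᶜ with hV
    have hVopen : IsOpen V := isOpen_compl_iff.2 isClosed_closure
    have hx0V : x0 ∈ V := hxU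
    have hVU : V ∩ U = ∅ := by
      rw [eq_empty_iff_forall_notMem]
      rintro y ⟨hy1, hy2⟩
      exact hy1 (subset_closure hy2)
    refine ⟨fun i => if i = j then Sum.inl '' V
        else if i = i₀ then {Sum.inr p} ∪ Sum.inl '' U else univ, fun i => ?_, ?_⟩
    · by_cases h1 : i = j
      · simp only [if_pos h1]
        refine ⟨⟨?_, fun q hq => absurd hq (by simp)⟩, ?_⟩
        · rw [preimage_image_eq _ Sum.inl_injective]; exact hVopen
        · rw [h1, hj]; exact mem_image_of_mem _ hx0V
      · by_cases h2 : i = i₀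
        · simp only [if_neg h1, if_pos h2]
          refine ⟨⟨?_, fun q _ => ⟨U, hUF, subset_union_right⟩⟩, ?_⟩
          · have : Sum.inl ⁻¹' ({(Sum.inr p : ExtSp X (n - 1 - k))} ∪ Sum.inl '' U) = U := by
              ext a
              simp [Sum.inl_injective.eq_iff]
            rw [this]
            exact hF.1.isOpen_mem U hUF
          · rw [h2, hp]; exact Or.inl rfl
        · simp only [if_neg h1, if_neg h2]
          exact ⟨⟨by simp, fun q _ => ⟨U, hUF, subset_univ _⟩⟩, mem_univ _⟩
    · ext w
      simp only [mem_iInter, mem_empty_iff_false, iff_false]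
      intro hw
      have h1 := hw j
      simp only [if_pos (rfl : j = j)] at h1
      obtain ⟨y, hyV, rfl⟩ := h1
      have h2 := hw i₀
      simp only [if_neg (Ne.symm hji), if_pos (rfl : i₀ = i₀)] at h2
      cases h2 with
      | inl h => exact Sum.inl_ne_inr h
      | inr h =>
        obtain ⟨b, hb, hba⟩ := h
        have : y ∈ V ∩ U := ⟨hyV, by rwa [← Sum.inl_injective hba]⟩
        rw [hVU] at this
        exact this

end Ext2


lemma reverse_aux {X : Type u} [TopologicalSpace X] {n : ℕ} (hn : 2 ≤ n)
    (h : ∀ F : Set (Set X), IsOpenUltrafilter F → (adh F).encard = (n - 1 : ℕ))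
    (Z : Type u) [TopologicalSpace Z] (e : X → Z) (hZ : NHausdorff Z n)
    (he : IsEmbedding e) : IsClosed (Set.range e) := by
  by_contra hnc
  have hns : ¬ closure (range e) ⊆ range e :=
    fun hsub => hnc (isClosed_of_closure_subset hsub)
  obtain ⟨z, hzc, hznr⟩ := not_subset.mp hns
  set F₀ : Set (Set X) := {V | IsOpen V ∧ ∃ W, IsOpen W ∧ z ∈ W ∧ e ⁻¹' W ⊆ V} with hF₀
  have hF₀f : IsOpenFilter F₀ := by
    constructor
    · exact ⟨univ, isOpen_univ, univ, isOpen_univ, mem_univ z, subset_univ _⟩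
    · exact fun V hV => hV.1
    · rintro V ⟨hVo, W, hWo, hzW, hsub⟩
      obtain ⟨w, hwW, hwr⟩ := mem_closure_iff.mp hzc W hWo hzW
      obtain ⟨y, rfl⟩ := hwr
      exact ⟨y, hsub hwW⟩
    · rintro V1 ⟨h1o, W1, hW1o, hz1, hs1⟩ V2 ⟨h2o, W2, hW2o, hz2, hs2⟩
      exact ⟨h1o.inter h2o, W1 ∩ W2, hW1o.inter hW2o, ⟨hz1, hz2⟩,
        fun y hy => ⟨hs1 hy.1, hs2 hy.2⟩⟩
    · rintro V ⟨hVo, W, hWo, hzW, hsub⟩ V' hV'o hVV'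
      exact ⟨hV'o, W, hWo, hzW, hsub.trans hVV'⟩
  obtain ⟨G, hG, hFG⟩ := hF₀f.exists_ultrafilter
  have hcard := h G hG
  obtain ⟨x, hxinj, hxr⟩ := exists_fin_inj_of_encard_eq hcard
  have hzx : ∀ i, z ≠ e (x i) := fun i hzi => hznr ⟨x i, hzi.symm⟩
  set pZ : Fin n → Z := fun i => if hi : (i : ℕ) < n - 1 then e (x ⟨i, hi⟩) else z with hpZ
  have hpinj : Injective pZ := by
    intro a b hab
    simp only [hpZ] at hab
    by_cases ha : (a : ℕ) < n - 1 <;> by_cases hb : (b : ℕ) < n - 1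
    · rw [dif_pos ha, dif_pos hb] at hab
      have := hxinj (he.injective hab)
      simp only [Fin.mk.injEq] at this
      exact Fin.ext this
    · rw [dif_pos ha, dif_neg hb] at hab
      exact (hzx _ hab.symm).elim
    · rw [dif_neg ha, dif_pos hb] at hab
      exact (hzx _ hab).elim
    · have ha' := a.isLt
      have hb' := b.isLt
      exact Fin.ext (by omega)
  obtain ⟨W, hW, hWe⟩ := hZ pZ hpinj
  have hgG : ∀ i, e ⁻¹' (W i) ∈ G := by
    intro i
    by_cases hi : (i : ℕ) < n - 1
    · have hxi : x ⟨i, hi⟩ ∈ adh G := hxr ▸ mem_range_self _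
      refine hG.mem_of_inter_nonempty ((hW i).1.preimage he.continuous) (fun U hU => ?_)
      have hcl : x ⟨i, hi⟩ ∈ closure U := mem_adh_iff.mp hxi U hU
      have hmem : x ⟨i, hi⟩ ∈ e ⁻¹' (W i) := by
        have hp : pZ i = e (x ⟨i, hi⟩) := by simp only [hpZ]; rw [dif_pos hi]
        rw [mem_preimage, ← hp]
        exact (hW i).2
      exact mem_closure_iff.mp hcl _ ((hW i).1.preimage he.continuous) hmem
    · apply hFG
      have hzi : pZ i = z := by simp only [hpZ]; rw [dif_neg hi]
      exact ⟨(hW i).1.preimage he.continuous, W i, (hW i).1, hzi ▸ (hW i).2, subset_rfl⟩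
  obtain ⟨y, hy⟩ := hG.1.nonempty_mem _ (hG.1.iInter_fin_mem _ hgG)
  have hye : e y ∈ ⋂ i, W i := mem_iInter.2 fun i => mem_iInter.mp hy i
  rw [hWe] at hye
  exact hye


theorem stmt10 {X : Type u} [TopologicalSpace X] (n : ℕ) (hn : 2 ≤ n)
    (hX : NHausdorff X n) :
    NHClosed X n ↔
      ∀ F : Set (Set X), IsOpenUltrafilter F → (adh F).encard = (n - 1 : ℕ) := by
  constructor
  · intro h F hF
    have hle : (adh F).encard ≤ ((n - 1 : ℕ) : ℕ∞) :=
      adh_encard_le (by omega) hX hF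
    by_contra hne
    have hlt : (adh F).encard < ((n - 1 : ℕ) : ℕ∞) := lt_of_le_of_ne hle hne
    obtain ⟨k, hk⟩ := WithTop.ne_top_iff_exists.mp (ne_top_of_lt hlt)
    have hkn : k < n - 1 := by
      have h' := hk ▸ hlt
      exact Nat.cast_lt.mp h'
    have hZH := ext_nHausdorff hn hX hF hk.symm hkn
    have hemb := ext_isEmbedding (m := n - 1 - k) hF.1
    have hclosed := h.2 (ExtSp X (n - 1 - k)) (extTop hF.1 (n - 1 - k)) Sum.inl hZH hemb
    exact ext_not_closed hF.1 (by omega) hclosed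
  · intro h
    exact ⟨hX, fun Z tZ e hZ he => reverse_aux hn h Z e hZ he⟩
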